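/- Let $A$ and $B$ be random variables taking values in finite sets $\mathscr{A}$ and $\mathscr{B}$. Then $\mathbf{K}\big(\mathcal{L}(A,B)\,\big\|\,\mathcal{L}(A)\otimes\mathcal{L}(B)\big) \le 2 \sum_{a\in\mathscr{A}} d_{TV}\big(\mathcal{L}(B\mid A=a),\,\mathcal{L}(B)\big)$. -/

import Mathlib

open MeasureTheory ProbabilityTheory
open scoped ENNReal NNReal

/- The Kullback-Leibler divergence, valued in `ℝ≥0∞` (appropriate for probability measures). -/
open Classical in
noncomputable def klDiv {α : Type*} [MeasurableSpace α] (μ ν : Measure α) : ℝ≥0∞ :=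
  if μ ≪ ν ∧ Integrable (llr μ ν) μ then ENNReal.ofReal (∫ x, llr μ ν x ∂μ) else ⊤

/-- Total variation distance between two measures on a finite measurable space with measurable
singletons: `(1/2) ∑_b |P{b} - Q{b}|`. -/
noncomputable def dTVfin {β : Type*} [Fintype β] [MeasurableSpace β]
    (P Q : Measure β) : ℝ :=
  (1 / 2) * ∑ b : β, |(P {b}).toReal - (Q {b}).toReal|

/-- Key real inequality: `p log (p/(pa*pb)) ≤ |p/pa - pb|` when `0 < p ≤ pb`, `0 < pa`. -/
lemma key_real_ineq {p pa pb : ℝ} (hp : 0 < p) (hpa : 0 < pa) (hppb : p ≤ pb) :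
    p * Real.log (p / (pa * pb)) ≤ |p / pa - pb| := by
  have hpb : 0 < pb := lt_of_lt_of_le hp hppb
  have hq : 0 < pa * pb := mul_pos hpa hpb
  rcases le_or_gt p (pa * pb) with h | h
  · have h1 : p / (pa * pb) ≤ 1 := (div_le_one hq).mpr h
    have hlog : Real.log (p / (pa * pb)) ≤ 0 := Real.log_nonpos (by positivity) h1
    have : p * Real.log (p / (pa * pb)) ≤ 0 :=
      mul_nonpos_of_nonneg_of_nonpos hp.le hlog
    exact this.trans (abs_nonneg _)
  · have hlog : Real.log (p / (pa * pb)) ≤ p / (pa * pb) - 1 :=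
      Real.log_le_sub_one_of_pos (by positivity)
    have h1 : p * Real.log (p / (pa * pb)) ≤ p * (p / (pa * pb) - 1) :=
      mul_le_mul_of_nonneg_left hlog hp.le
    have h2 : p * (p / (pa * pb) - 1) = (p / (pa * pb)) * (p - pa * pb) := by
      field_simp
    have h3 : p / (pa * pb) ≤ 1 / pa := by
      rw [div_le_div_iff₀ hq hpa]
      nlinarith
    have h4 : (p / (pa * pb)) * (p - pa * pb) ≤ (1 / pa) * (p - pa * pb) :=
      mul_le_mul_of_nonneg_right h3 (by linarith)
    have h5 : (1 / pa) * (p - pa * pb) = p / pa - pb := by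
      field_simp
    calc p * Real.log (p / (pa * pb)) ≤ (p / (pa * pb)) * (p - pa * pb) := by rw [← h2]; exact h1
      _ ≤ (1 / pa) * (p - pa * pb) := h4
      _ = p / pa - pb := h5
      _ ≤ |p / pa - pb| := le_abs_self _

/- STATEMENT 5: For random variables `A`, `B` with values in finite sets,
`K(L(A,B) ‖ L(A) ⊗ L(B)) ≤ 2 ∑_a d_TV(L(B | A = a), L(B))`, where terms with `P(A = a) = 0`
are interpreted as `0`. -/
open Classical in
theorem klDiv_joint_le_sum_tv
    {Ω 𝒜 ℬ : Type*} [MeasurableSpace Ω]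
    [Fintype 𝒜] [MeasurableSpace 𝒜] [MeasurableSingletonClass 𝒜]
    [Fintype ℬ] [MeasurableSpace ℬ] [MeasurableSingletonClass ℬ]
    (μ : Measure Ω) [IsProbabilityMeasure μ]
    (A : Ω → 𝒜) (B : Ω → ℬ) (hA : Measurable A) (hB : Measurable B) :
    klDiv (μ.map (fun ω => (A ω, B ω))) ((μ.map A).prod (μ.map B)) ≤
      ENNReal.ofReal (2 * ∑ a : 𝒜,
        if μ (A ⁻¹' {a}) = 0 then 0
        else dTVfin ((ProbabilityTheory.cond μ (A ⁻¹' {a})).map B) (μ.map B)) := by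
  have hABm : Measurable fun ω => (A ω, B ω) := hA.prodMk hB
  set π := μ.map (fun ω => (A ω, B ω)) with hπdef
  set ρ := (μ.map A).prod (μ.map B) with hρdef
  haveI : IsProbabilityMeasure π := Measure.isProbabilityMeasure_map hABm.aemeasurable
  haveI : IsProbabilityMeasure (μ.map A) := Measure.isProbabilityMeasure_map hA.aemeasurable
  haveI : IsProbabilityMeasure (μ.map B) := Measure.isProbabilityMeasure_map hB.aemeasurable
  haveI : IsProbabilityMeasure ρ := by rw [hρdef]; infer_instance
  -- singleton values
  have hπ : ∀ a b, π {(a, b)} = μ (A ⁻¹' {a} ∩ B ⁻¹' {b}) := by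
    intro a b
    rw [hπdef, Measure.map_apply hABm (measurableSet_singleton _),
      ← Set.singleton_prod_singleton, Set.mk_preimage_prod]
  have hρs : ∀ a b, ρ {(a, b)} = μ (A ⁻¹' {a}) * μ (B ⁻¹' {b}) := by
    intro a b
    rw [hρdef, ← Set.singleton_prod_singleton, Measure.prod_prod,
      Measure.map_apply hA (measurableSet_singleton _),
      Measure.map_apply hB (measurableSet_singleton _)]
  -- pointwise absolute continuity
  have hpt : ∀ x : 𝒜 × ℬ, ρ {x} = 0 → π {x} = 0 := by
    rintro ⟨a, b⟩ h0
    rw [hρs] at h0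
    rw [hπ]
    rcases mul_eq_zero.mp h0 with h | h
    · exact measure_mono_null Set.inter_subset_left h
    · exact measure_mono_null Set.inter_subset_right h
  have hAC : π ≪ ρ := by
    intro s hs
    have hsub : s ⊆ ⋃ x ∈ s, ({x} : Set (𝒜 × ℬ)) := by simp
    refine measure_mono_null hsub ?_
    rw [measure_biUnion_null_iff s.to_countable]
    intro x hx
    exact hpt x (measure_mono_null (Set.singleton_subset_iff.mpr hx) hs)
  have hInt : Integrable (llr π ρ) π := Integrable.of_finite
  rw [klDiv, if_pos ⟨hAC, hInt⟩]
  apply ENNReal.ofReal_le_ofReal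
  -- compute rnDeriv at points of positive π-mass
  have hrn : ∀ x : 𝒜 × ℬ, π {x} ≠ 0 →
      llr π ρ x = Real.log ((π {x}).toReal / (ρ {x}).toReal) := by
    intro x hx
    have hρx : ρ {x} ≠ 0 := fun h => hx (hpt x h)
    have h1 := Measure.setLIntegral_rnDeriv hAC {x}
    rw [lintegral_singleton] at h1
    have h2 : π.rnDeriv ρ x = π {x} / ρ {x} := by
      rw [ENNReal.eq_div_iff hρx (measure_ne_top _ _), mul_comm]
      exact h1
    simp only [llr_def, h2, ENNReal.toReal_div]
  rw [integral_fintype hInt, Fintype.sum_prod_type, Finset.mul_sum]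
  simp only [Measure.real]
  refine Finset.sum_le_sum fun a _ => ?_
  by_cases hpa : μ (A ⁻¹' {a}) = 0
  · simp only [hpa, if_true, mul_zero]
    apply le_of_eq
    refine Finset.sum_eq_zero fun b _ => ?_
    have : π {(a, b)} = 0 := by
      rw [hπ]; exact measure_mono_null Set.inter_subset_left hpa
    simp [this]
  · simp only [hpa, if_false]
    have hpa' : (0 : ℝ) < (μ (A ⁻¹' {a})).toReal :=
      ENNReal.toReal_pos hpa (measure_ne_top _ _)
    have hc : ∀ b : ℬ, (((ProbabilityTheory.cond μ (A ⁻¹' {a})).map B) {b}).toReal =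
        (π {(a, b)}).toReal / (μ (A ⁻¹' {a})).toReal := by
      intro b
      rw [Measure.map_apply hB (measurableSet_singleton _),
        ProbabilityTheory.cond_apply (hA (measurableSet_singleton a)), hπ,
        ENNReal.toReal_mul, ENNReal.toReal_inv]
      ring
    rw [dTVfin]
    rw [show (2 : ℝ) * ((1 / 2) * ∑ b : ℬ,
        |(((ProbabilityTheory.cond μ (A ⁻¹' {a})).map B) {b}).toReal -
          ((μ.map B) {b}).toReal|) = ∑ b : ℬ,
        |(((ProbabilityTheory.cond μ (A ⁻¹' {a})).map B) {b}).toReal -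
          ((μ.map B) {b}).toReal| by ring]
    refine Finset.sum_le_sum fun b _ => ?_
    rw [hc b]
    by_cases hp0 : π {(a, b)} = 0
    · simp only [hp0, ENNReal.toReal_zero, smul_eq_mul, zero_mul]
      exact abs_nonneg _
    · have hp : (0 : ℝ) < (π {(a, b)}).toReal :=
        ENNReal.toReal_pos hp0 (measure_ne_top _ _)
      have hppb : (π {(a, b)}).toReal ≤ ((μ.map B) {b}).toReal := by
        apply ENNReal.toReal_mono (measure_ne_top _ _)
        rw [hπ, Measure.map_apply hB (measurableSet_singleton _)]
        exact measure_mono Set.inter_subset_right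
      have hq : (ρ {(a, b)}).toReal =
          (μ (A ⁻¹' {a})).toReal * ((μ.map B) {b}).toReal := by
        rw [hρs, ENNReal.toReal_mul, Measure.map_apply hB (measurableSet_singleton _)]
      rw [smul_eq_mul, hrn _ hp0, hq]
      exact key_real_ineq hp hpa' hppb
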